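/- For any n ∈ ℕ with n ≥ 1, and d(m) := σ² + ∫_{ℝ\{0}} e^{(m-1)u}(e^u−1)² dM(u), one has ∑_{1 ≤ k < p ≤ n} d(p−k) = φ(−in), where φ(−in) := (σ²/2)(n²−n) + ∫_{ℝ\{0}} (e^{nu} − 1 − n(e^u−1)) dM(u). -/

import Mathlib

open MeasureTheory Real

lemma inner_reindex (g : ℕ → ℝ) (p : ℕ) :
    ∑ k ∈ Finset.Ico 1 p, g (p - k) = ∑ i ∈ Finset.range (p - 1), g (i + 1) := by
  rw [Finset.sum_Ico_eq_sum_range]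
  rw [← Finset.sum_range_reflect (fun i => g (i + 1)) (p - 1)]
  apply Finset.sum_congr rfl
  intro i hi
  simp only [Finset.mem_range] at hi
  congr 1
  omega

lemma key_pointwise (u : ℝ) (n : ℕ) :
    ∑ p ∈ Finset.Icc 1 n, ∑ k ∈ Finset.Ico 1 p,
        Real.exp (((↑(p - k) : ℝ) - 1) * u) * (Real.exp u - 1) ^ 2 =
      Real.exp ((n : ℝ) * u) - 1 - (n : ℝ) * (Real.exp u - 1) := by
  set x := Real.exp u with hx
  have hinner : ∀ p : ℕ, ∑ k ∈ Finset.Ico 1 p,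
      Real.exp (((↑(p - k) : ℝ) - 1) * u) * (x - 1) ^ 2 =
      (x ^ (p - 1) - 1) * (x - 1) := by
    intro p
    rw [inner_reindex (fun m => Real.exp (((m : ℝ) - 1) * u) * (x - 1) ^ 2) p]
    have : ∀ i : ℕ, Real.exp (((↑(i + 1) : ℝ) - 1) * u) * (x - 1) ^ 2
        = x ^ i * (x - 1) ^ 2 := by
      intro i
      push_cast
      rw [add_sub_cancel_right, ← Real.exp_nat_mul]
    simp only [this]
    rw [← Finset.sum_mul, sq, ← mul_assoc, Finset.sum_mul, ← Finset.sum_mul,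
      geom_sum_mul]
  simp only [hinner]
  rw [← Finset.Ico_add_one_right_eq_Icc, Finset.sum_Ico_eq_sum_range]
  have : ∀ i : ℕ, (x ^ (1 + i - 1) - 1) * (x - 1) = x ^ i * (x - 1) - (x - 1) := by
    intro i
    have : 1 + i - 1 = i := by omega
    rw [this]; ring
  simp only [this, Finset.sum_sub_distrib, Finset.sum_const, Finset.card_range,
    nsmul_eq_mul, Nat.succ_sub_one, Nat.add_sub_cancel]
  rw [← Finset.sum_mul, geom_sum_mul, hx, ← Real.exp_nat_mul]
  ring

lemma gauss_sum (σ2 : ℝ) (n : ℕ) :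
    ∑ p ∈ Finset.Icc 1 n, ∑ _k ∈ Finset.Ico 1 p, σ2 = σ2 / 2 * ((n : ℝ) ^ 2 - n) := by
  induction n with
  | zero => simp
  | succ m ih =>
    rw [Finset.sum_Icc_succ_top (by omega : 1 ≤ m + 1), ih]
    simp only [Finset.sum_const, Nat.card_Ico, nsmul_eq_mul, Nat.add_sub_cancel]
    push_cast
    ring

theorem stmt0 (σ2 : ℝ) (hσ : 0 ≤ σ2) (M : Measure ℝ) (n : ℕ) (hn : 1 ≤ n)
    (hd : ∀ m : ℕ, Integrable
      (fun u : ℝ => Real.exp (((m : ℝ) - 1) * u) * (Real.exp u - 1) ^ 2)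
      (M.restrict {(0 : ℝ)}ᶜ))
    (hφ : Integrable
      (fun u : ℝ => Real.exp ((n : ℝ) * u) - 1 - (n : ℝ) * (Real.exp u - 1))
      (M.restrict {(0 : ℝ)}ᶜ))
    (d : ℕ → ℝ)
    (hd_def : ∀ m : ℕ, d m = σ2 +
      ∫ u in {(0 : ℝ)}ᶜ, Real.exp (((m : ℝ) - 1) * u) * (Real.exp u - 1) ^ 2 ∂M) :
    ∑ p ∈ Finset.Icc 1 n, ∑ k ∈ Finset.Ico 1 p, d (p - k) =
      σ2 / 2 * ((n : ℝ) ^ 2 - n) +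
        ∫ u in {(0 : ℝ)}ᶜ,
          (Real.exp ((n : ℝ) * u) - 1 - (n : ℝ) * (Real.exp u - 1)) ∂M := by
  simp only [hd_def, Finset.sum_add_distrib]
  congr 1
  · exact gauss_sum σ2 n
  · calc ∑ p ∈ Finset.Icc 1 n, ∑ k ∈ Finset.Ico 1 p,
        ∫ u in {(0 : ℝ)}ᶜ, Real.exp (((↑(p - k) : ℝ) - 1) * u) * (Real.exp u - 1) ^ 2 ∂M
        = ∑ p ∈ Finset.Icc 1 n, ∫ u in {(0 : ℝ)}ᶜ, ∑ k ∈ Finset.Ico 1 p,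
            Real.exp (((↑(p - k) : ℝ) - 1) * u) * (Real.exp u - 1) ^ 2 ∂M := by
          exact Finset.sum_congr rfl fun p _ =>
            (integral_finset_sum _ fun k _ => hd (p - k)).symm
      _ = ∫ u in {(0 : ℝ)}ᶜ, ∑ p ∈ Finset.Icc 1 n, ∑ k ∈ Finset.Ico 1 p,
            Real.exp (((↑(p - k) : ℝ) - 1) * u) * (Real.exp u - 1) ^ 2 ∂M :=
          (integral_finset_sum _ fun p _ =>
            integrable_finset_sum _ fun k _ => hd (p - k)).symm
      _ = ∫ u in {(0 : ℝ)}ᶜ,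
            (Real.exp ((n : ℝ) * u) - 1 - (n : ℝ) * (Real.exp u - 1)) ∂M := by
          apply integral_congr_ae
          filter_upwards with u
          exact key_pointwise u n
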